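/- Fix an integer m ≥ 2. The set of real numbers x in [−1,0) whose minus ('backward') continued fraction expansion x = (0, n₁, n₂, …) with all n_k ≥ 2 satisfies n_k ∈ {m, m+1} for all k ≥ 1 has Lebesgue measure zero. -/

import Mathlib

open Filter Topology MeasureTheory

/-- Numerators: `pfun n (k+2) = p_k`, `p_{-2}=0`, `p_{-1}=1`, `p_k = n_k p_{k-1} - p_{k-2}`. -/
def pfun (n : ℕ → ℤ) : ℕ → ℤ
  | 0 => 0
  | 1 => 1
  | k + 2 => n k * pfun n (k + 1) - pfun n k

/-- Denominators: `qfun n (k+2) = q_k`, `q_{-2}=-1`, `q_{-1}=0`, `q_k = n_k q_{k-1} - q_{k-2}`. -/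
def qfun (n : ℕ → ℤ) : ℕ → ℤ
  | 0 => -1
  | 1 => 0
  | k + 2 => n k * qfun n (k + 1) - qfun n k

/-- Prepend the digit `0` to a digit sequence, giving the digit sequence of `(0, n₁, n₂, …)`. -/
def prep (n : ℕ → ℤ) : ℕ → ℤ
  | 0 => 0
  | i + 1 => n i

/-- `x` has the minus continued fraction expansion `(0, n₁, n₂, …)`, in the sense that
the convergents tend to `x`. -/
def IsMinusCF (x : ℝ) (n : ℕ → ℤ) : Prop :=
  Tendsto (fun k : ℕ =>
      (pfun (prep n) (k + 2) : ℝ) / (qfun (prep n) (k + 2) : ℝ)) atTop (𝓝 x)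

/-! ### Auxiliary definitions -/

def QQ (n : ℕ → ℤ) (k : ℕ) : ℤ := qfun (prep n) (k+1)
def PP (n : ℕ → ℤ) (k : ℕ) : ℤ := pfun (prep n) (k+1)
def DD (n : ℕ → ℤ) (k : ℕ) : ℤ := QQ n (k+1) - QQ n k

@[simp] lemma QQ_zero (n : ℕ → ℤ) : QQ n 0 = 0 := rfl
@[simp] lemma QQ_one (n : ℕ → ℤ) : QQ n 1 = 1 := by
  show prep n 0 * qfun (prep n) 1 - qfun (prep n) 0 = 1
  simp [prep, qfun]
@[simp] lemma PP_zero (n : ℕ → ℤ) : PP n 0 = 1 := rfl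
@[simp] lemma PP_one (n : ℕ → ℤ) : PP n 1 = 0 := by
  show prep n 0 * pfun (prep n) 1 - pfun (prep n) 0 = 0
  simp [prep, pfun]

lemma QQ_rec (n : ℕ → ℤ) (k : ℕ) : QQ n (k+2) = n k * QQ n (k+1) - QQ n k := by
  show prep n (k+1) * qfun (prep n) (k+2) - qfun (prep n) (k+1) = _
  rfl

lemma PP_rec (n : ℕ → ℤ) (k : ℕ) : PP n (k+2) = n k * PP n (k+1) - PP n k := by
  show prep n (k+1) * pfun (prep n) (k+2) - pfun (prep n) (k+1) = _
  rfl

lemma QQ_nonneg_lt {n : ℕ → ℤ} (h2 : ∀ k, 2 ≤ n k) :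
    ∀ k, 0 ≤ QQ n k ∧ QQ n k < QQ n (k+1) := by
  intro k
  induction k with
  | zero => simp
  | succ k ih =>
    obtain ⟨h0, h1⟩ := ih
    refine ⟨le_of_lt (lt_of_le_of_lt h0 h1), ?_⟩
    rw [QQ_rec]
    nlinarith [h2 k]

lemma QQ_lt {n : ℕ → ℤ} (h2 : ∀ k, 2 ≤ n k) (k : ℕ) : QQ n k < QQ n (k+1) :=
  (QQ_nonneg_lt h2 k).2

lemma QQ_pos {n : ℕ → ℤ} (h2 : ∀ k, 2 ≤ n k) (k : ℕ) : 0 < QQ n (k+1) :=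
  lt_of_le_of_lt (QQ_nonneg_lt h2 k).1 (QQ_nonneg_lt h2 k).2

lemma DD_pos {n : ℕ → ℤ} (h2 : ∀ k, 2 ≤ n k) (k : ℕ) : 0 < DD n k :=
  sub_pos.mpr (QQ_nonneg_lt h2 k).2

lemma DD_le_succ {n : ℕ → ℤ} (h2 : ∀ k, 2 ≤ n k) (k : ℕ) : DD n k ≤ DD n (k+1) := by
  have h := QQ_rec n k
  have := QQ_pos h2 k
  have := h2 k
  unfold DD
  nlinarith

lemma DD_mono {n : ℕ → ℤ} (h2 : ∀ k, 2 ≤ n k) {j k : ℕ} (hjk : j ≤ k) : DD n j ≤ DD n k := by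
  induction k with
  | zero => simp_all
  | succ k ih =>
    rcases Nat.lt_or_ge j (k+1) with h | h
    · exact le_trans (ih (Nat.lt_succ_iff.mp h)) (DD_le_succ h2 k)
    · have : j = k + 1 := le_antisymm hjk h
      simp [this]

lemma QQ_le_succ {n : ℕ → ℤ} (h2 : ∀ k, 2 ≤ n k) (k : ℕ) : QQ n k + 1 ≤ QQ n (k+1) :=
  (QQ_nonneg_lt h2 k).2

lemma le_QQ {n : ℕ → ℤ} (h2 : ∀ k, 2 ≤ n k) (k : ℕ) : (k : ℤ) ≤ QQ n k := by
  induction k with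
  | zero => simp
  | succ k ih => have := QQ_le_succ h2 k; push_cast; omega

lemma DD_le_QQ {n : ℕ → ℤ} (h2 : ∀ k, 2 ≤ n k) (k : ℕ) : DD n k ≤ QQ n (k+1) := by
  have := (QQ_nonneg_lt h2 k).1; unfold DD; omega

lemma det (n : ℕ → ℤ) (k : ℕ) : PP n k * QQ n (k+1) - PP n (k+1) * QQ n k = 1 := by
  induction k with
  | zero => simp
  | succ k ih =>
    rw [QQ_rec, PP_rec]
    ring_nf
    ring_nf at ih
    linarith

noncomputable def cv (n : ℕ → ℤ) (k : ℕ) : ℝ := (PP n (k+1) : ℝ) / (QQ n (k+1) : ℝ)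
noncomputable def lo (n : ℕ → ℤ) (k : ℕ) : ℝ := cv n k - 1 / ((DD n k : ℝ) * (QQ n (k+1) : ℝ))
noncomputable def JJ (n : ℕ → ℤ) (k : ℕ) : Set ℝ := Set.Icc (lo n k) (cv n k)

section real
variable {n : ℕ → ℤ} (h2 : ∀ k, 2 ≤ n k)
include h2

lemma Qr_pos (k : ℕ) : (0:ℝ) < (QQ n (k+1) : ℝ) := by exact_mod_cast QQ_pos h2 k
lemma Dr_pos (k : ℕ) : (0:ℝ) < (DD n k : ℝ) := by exact_mod_cast DD_pos h2 k

omit h2 in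
lemma det_r (k : ℕ) : (PP n k : ℝ) * (QQ n (k+1) : ℝ) - (PP n (k+1) : ℝ) * (QQ n k : ℝ) = 1 := by
  exact_mod_cast congrArg (fun z : ℤ => (z : ℝ)) (det n k)

omit h2 in
lemma DD_r (k : ℕ) : (DD n k : ℝ) = (QQ n (k+1) : ℝ) - (QQ n k : ℝ) := by
  unfold DD; push_cast; ring

lemma cv_diff (k : ℕ) :
    cv n k - cv n (k+1) = 1 / ((QQ n (k+1) : ℝ) * (QQ n (k+2) : ℝ)) := by
  have h1 := Qr_pos h2 k
  have h2' := Qr_pos h2 (k+1)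
  have hd := det_r (n := n) (k+1)
  unfold cv
  field_simp
  linarith [hd]

lemma cv_antitone {j k : ℕ} (hjk : j ≤ k) : cv n k ≤ cv n j := by
  induction k with
  | zero => simp_all
  | succ k ih =>
    rcases Nat.lt_or_ge j (k+1) with h | h
    · refine le_trans ?_ (ih (Nat.lt_succ_iff.mp h))
      have h1 := cv_diff h2 k
      have h3 : (0:ℝ) < 1 / ((QQ n (k+1) : ℝ) * (QQ n (k+2) : ℝ)) := by
        have := Qr_pos h2 k; have := Qr_pos h2 (k+1); positivity
      linarith
    · have : j = k + 1 := le_antisymm hjk h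
      simp [this]

lemma key_ineq {k j : ℕ} (hkj : k ≤ j) :
    1 / ((QQ n (j+1) : ℝ) * (QQ n (j+2) : ℝ)) + 1 / ((DD n (j+1) : ℝ) * (QQ n (j+2) : ℝ))
      ≤ 1 / ((DD n k : ℝ) * (QQ n (j+1) : ℝ)) := by
  have ha := Qr_pos h2 j
  have hb := Qr_pos h2 (j+1)
  have hd := Dr_pos h2 k
  have hd' := Dr_pos h2 (j+1)
  have hdle : (DD n k : ℝ) ≤ (DD n (j+1) : ℝ) := by
    exact_mod_cast DD_mono h2 (le_trans hkj (Nat.le_succ j))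
  have hb2 : (QQ n (j+2) : ℝ) = (QQ n (j+1) : ℝ) + (DD n (j+1) : ℝ) := by
    rw [DD_r]; ring
  set a := (QQ n (j+1) : ℝ)
  set d' := (DD n (j+1) : ℝ)
  set dk := (DD n k : ℝ)
  rw [hb2]
  rw [div_add_div _ _ (by positivity) (by positivity), div_le_div_iff₀ (by positivity) (by positivity)]
  have base : dk * (a*(a+d')^2) ≤ d' * (a*(a+d')^2) :=
    mul_le_mul_of_nonneg_right hdle (by positivity)
  nlinarith [base]

lemma cv_lower {k j : ℕ} (hjk : k ≤ j) :
    cv n k - (1 / (DD n k : ℝ)) * (1 / (QQ n (k+1) : ℝ) - 1 / (QQ n (j+1) : ℝ)) ≤ cv n j := by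
  induction j with
  | zero =>
    have : k = 0 := Nat.le_zero.mp hjk
    simp [this]
  | succ j ih =>
    rcases Nat.lt_or_ge k (j+1) with h | h
    · have hkj : k ≤ j := Nat.lt_succ_iff.mp h
      have ihh := ih hkj
      have hdiff := cv_diff h2 j
      have ha := Qr_pos h2 j
      have hb := Qr_pos h2 (j+1)
      have hdk := Dr_pos h2 k
      have hd' := Dr_pos h2 (j+1)
      have key := key_ineq h2 hkj
      have e2 : (0:ℝ) < 1 / ((DD n (j+1) : ℝ) * (QQ n (j+2) : ℝ)) := by positivity
      -- 1/(a b) ≤ (1/dk)(1/a − 1/b)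
      have key2 : 1 / ((QQ n (j+1) : ℝ) * (QQ n (j+2) : ℝ))
          ≤ (1 / (DD n k : ℝ)) * (1 / (QQ n (j+1) : ℝ) - 1 / (QQ n (j+2) : ℝ)) := by
        have e3 : (1 / (DD n k : ℝ)) * (1 / (QQ n (j+1) : ℝ) - 1 / (QQ n (j+2) : ℝ))
            = ((QQ n (j+2) : ℝ) - (QQ n (j+1) : ℝ)) / ((DD n k : ℝ) * ((QQ n (j+1) : ℝ) * (QQ n (j+2) : ℝ))) := by
          field_simp
          try ring
        rw [e3, div_le_div_iff₀ (by positivity) (by positivity)]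
        have hdle : (DD n k : ℝ) ≤ (QQ n (j+2) : ℝ) - (QQ n (j+1) : ℝ) := by
          rw [← DD_r]
          exact_mod_cast DD_mono h2 (le_trans hkj (Nat.le_succ j))
        nlinarith [mul_le_mul_of_nonneg_right hdle (le_of_lt (mul_pos ha hb))]
      have expand : (1 / (DD n k : ℝ)) * (1 / (QQ n (k+1) : ℝ) - 1 / (QQ n (j+2) : ℝ))
          = (1 / (DD n k : ℝ)) * (1 / (QQ n (k+1) : ℝ) - 1 / (QQ n (j+1) : ℝ))
            + (1 / (DD n k : ℝ)) * (1 / (QQ n (j+1) : ℝ) - 1 / (QQ n (j+2) : ℝ)) := by ring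
      linarith
    · have : k = j + 1 := le_antisymm hjk h
      simp [this]

lemma cv_mem_JJ {k j : ℕ} (hjk : k ≤ j) : cv n j ∈ JJ n k := by
  constructor
  · have h1 := cv_lower h2 hjk
    have hq := Qr_pos h2 j
    have hd := Dr_pos h2 k
    have hqk := Qr_pos h2 k
    unfold lo
    have h0 : (0:ℝ) < 1 / (QQ n (j+1) : ℝ) := by positivity
    have h3 : (1 / (DD n k : ℝ)) * (1 / (QQ n (k+1) : ℝ) - 1 / (QQ n (j+1) : ℝ))
        ≤ (1 / (DD n k : ℝ)) * (1 / (QQ n (k+1) : ℝ)) := by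
      apply mul_le_mul_of_nonneg_left _ (by positivity)
      linarith
    have h4 : (1 / (DD n k : ℝ)) * (1 / (QQ n (k+1) : ℝ))
        = 1 / ((DD n k : ℝ) * (QQ n (k+1) : ℝ)) := by
      field_simp
    linarith
  · exact cv_antitone h2 hjk

lemma mem_JJ_of_isMinusCF {x : ℝ} (hx : IsMinusCF x n) (k : ℕ) : x ∈ JJ n k := by
  have hconv : Tendsto (fun j : ℕ => cv n j) atTop (𝓝 x) := hx
  have hcl : IsClosed (JJ n k) := isClosed_Icc
  have hev : ∀ᶠ j in (atTop : Filter ℕ), cv n j ∈ JJ n k := by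
    filter_upwards [eventually_ge_atTop k] with j hj using cv_mem_JJ h2 hj
  exact hcl.mem_of_tendsto hconv hev

lemma lo_mono (j : ℕ) : lo n j ≤ lo n (j+1) := by
  have hdiff := cv_diff h2 j
  have key := key_ineq h2 (le_refl j)
  unfold lo
  linarith

lemma JJ_anti {k j : ℕ} (hjk : k ≤ j) : JJ n j ⊆ JJ n k := by
  induction j with
  | zero => have : k = 0 := Nat.le_zero.mp hjk; simp [this]
  | succ j ih =>
    rcases Nat.lt_or_ge k (j+1) with h | h
    · refine subset_trans ?_ (ih (Nat.lt_succ_iff.mp h))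
      intro y hy
      obtain ⟨hy1, hy2⟩ := hy
      refine ⟨le_trans (lo_mono h2 j) hy1, ?_⟩
      have h1 := cv_diff h2 j
      have h3 : (0:ℝ) < 1 / ((QQ n (j+1) : ℝ) * (QQ n (j+2) : ℝ)) := by
        have := Qr_pos h2 j; have := Qr_pos h2 (j+1); positivity
      linarith
    · have : k = j + 1 := le_antisymm hjk h
      simp [this]

end real

/-- values up to index `k+1` depend only on digits below `k`. -/
lemma congr_QP {n n' : ℕ → ℤ} {k : ℕ} (h : ∀ i, i < k → n i = n' i) :
    ∀ j, j ≤ k + 1 → QQ n j = QQ n' j ∧ PP n j = PP n' j := by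
  intro j
  induction j using Nat.strong_induction_on with
  | _ j ih =>
    match j with
    | 0 => intro _; exact ⟨rfl, rfl⟩
    | 1 => intro _; constructor <;> simp [QQ, PP, qfun, pfun, prep]
    | (j+2) =>
      intro hj
      have h1 := ih (j+1) (by omega) (by omega)
      have h0 := ih j (by omega) (by omega)
      have hd : n j = n' j := h j (by omega)
      rw [QQ_rec, PP_rec, QQ_rec, PP_rec, hd, h1.1, h1.2, h0.1, h0.2]
      exact ⟨rfl, rfl⟩

lemma congr_cv {n n' : ℕ → ℤ} {k : ℕ} (h : ∀ i, i < k → n i = n' i) : cv n k = cv n' k := by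
  unfold cv
  rw [(congr_QP h (k+1) (le_refl _)).1, (congr_QP h (k+1) (le_refl _)).2]

lemma congr_JJ {n n' : ℕ → ℤ} {k : ℕ} (h : ∀ i, i < k → n i = n' i) : JJ n k = JJ n' k := by
  have h1 := congr_QP h (k+1) (le_refl _)
  have h0 := congr_QP h k (by omega)
  unfold JJ lo cv DD
  rw [h1.1, h1.2, h0.1]

/-- sibling tiling: if two digit sequences agree below `k` and their `k`-th digits are `ℓ` and
`ℓ+1`, then the lower endpoint of the second's level-`k+1` interval equals the upper endpoint of
the first's. -/
lemma sibling_touch {n n' : ℕ → ℤ} (h2 : ∀ k, 2 ≤ n k) {k : ℕ} {ℓ : ℤ}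
    (h : ∀ i, i < k → n i = n' i) (hk : n k = ℓ) (hk' : n' k = ℓ + 1) (hl : 2 ≤ ℓ) :
    lo n' (k+1) = cv n (k+1) := by
  have hq := congr_QP h (k+1) (le_refl _)
  have hq0 := congr_QP h k (by omega)
  have hdet : (PP n k : ℝ) * (QQ n (k+1) : ℝ) - (PP n (k+1) : ℝ) * (QQ n k : ℝ) = 1 := by
    exact_mod_cast congrArg (fun z : ℤ => (z : ℝ)) (det n k)
  have hqpos : (0:ℝ) < (QQ n (k+1) : ℝ) := by exact_mod_cast QQ_pos h2 k
  have hq0nonneg : (0:ℝ) ≤ (QQ n k : ℝ) := by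
    rcases Nat.eq_zero_or_pos k with h0 | h0
    · subst h0; simp [QQ, qfun, prep]
    · obtain ⟨k', rfl⟩ := Nat.exists_eq_succ_of_ne_zero (Nat.pos_iff_ne_zero.mp h0)
      exact_mod_cast le_of_lt (QQ_pos h2 k')
  set p := (PP n (k+1) : ℝ) with hp
  set q := (QQ n (k+1) : ℝ) with hqd
  set p' := (PP n k : ℝ) with hp'
  set q' := (QQ n k : ℝ) with hq'
  have hQr : (QQ n' (k+1) : ℝ) = q := by rw [hqd, hq.1]
  have hPr : (PP n' (k+1) : ℝ) = p := by rw [hp, hq.2]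
  have hQ0r : (QQ n' k : ℝ) = q' := by rw [hq', hq0.1]
  have hP0r : (PP n' k : ℝ) = p' := by rw [hp', hq0.2]
  have e1 : (QQ n (k+2) : ℝ) = ℓ * q - q' := by
    rw [QQ_rec, hk]; push_cast; ring
  have e2 : (PP n (k+2) : ℝ) = ℓ * p - p' := by
    rw [PP_rec, hk]; push_cast; ring
  have e1' : (QQ n' (k+2) : ℝ) = (ℓ+1) * q - q' := by
    rw [QQ_rec, hk']; push_cast; rw [hQr, hQ0r]; try ring
  have e2' : (PP n' (k+2) : ℝ) = (ℓ+1) * p - p' := by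
    rw [PP_rec, hk']; push_cast; rw [hPr, hP0r]; try ring
  have eD : (DD n' (k+1) : ℝ) = ℓ * q - q' := by
    have : (DD n' (k+1) : ℝ) = (QQ n' (k+2) : ℝ) - (QQ n' (k+1) : ℝ) := by
      unfold DD; push_cast; ring
    rw [this, e1', hQr]; ring
  have hqq : q' < q := by rw [hq', hqd]; exact_mod_cast QQ_lt h2 k
  have hden1 : (0:ℝ) < ℓ * q - q' := by
    have h1 : (1:ℝ) * q ≤ (ℓ:ℝ) * q := by
      apply mul_le_mul_of_nonneg_right _ (le_of_lt hqpos)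
      exact_mod_cast le_trans one_le_two hl
    nlinarith
  have hden2 : (0:ℝ) < (ℓ+1) * q - q' := by nlinarith
  unfold lo cv
  rw [e1, e2, e1', e2', eD]
  rw [div_sub_div _ _ (ne_of_gt hden2) (by positivity)]
  rw [div_eq_div_iff (by positivity) (ne_of_gt hden1)]
  linear_combination (((ℓ:ℝ)+1) * q - q') * ((ℓ:ℝ) * q - q') * hdet

/-! ### Children and the covering estimate -/

/-- The sequence with prefix of `n` below `K`, digit `c` at `K`, and `c'` afterwards. -/
def child (n : ℕ → ℤ) (K : ℕ) (c c' : ℤ) : ℕ → ℤ := fun i =>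
  if i < K then n i else if i = K then c else c'

lemma child_digits {n : ℕ → ℤ} {m : ℤ} (hd : ∀ k, n k = m ∨ n k = m + 1) (K : ℕ) {c : ℤ}
    (hc : c = m ∨ c = m + 1) : ∀ k, child n K c m k = m ∨ child n K c m k = m + 1 := by
  intro k
  unfold child
  split_ifs with h1 h2
  · exact hd k
  · exact hc
  · exact Or.inl rfl

lemma child_prefix (n : ℕ → ℤ) (K : ℕ) (c c' : ℤ) : ∀ i, i < K → n i = child n K c c' i := by
  intro i hi
  simp [child, hi]

lemma child_at (n : ℕ → ℤ) (K : ℕ) (c c' : ℤ) : child n K c c' K = c := by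
  simp [child]

/-- The covering of `SS ∩ JJ n K` by the two child intervals and finitely many points. -/
lemma cover_subset (m : ℤ) (hm : 2 ≤ m) {n : ℕ → ℤ} (hd : ∀ k, n k = m ∨ n k = m + 1) (K : ℕ) :
    {x : ℝ | ∃ n' : ℕ → ℤ, (∀ k, n' k = m ∨ n' k = m + 1) ∧ IsMinusCF x n'} ∩ JJ n K ⊆
      (JJ (child n K m m) (K+1) ∪ JJ (child n K (m+1) m) (K+1)) ∪
        (⋃ j ∈ Set.Iio K, {cv (child n j m m) (j+1)}) := by
  have h2 : ∀ k, 2 ≤ n k := fun k => by rcases hd k with h | h <;> omega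
  rintro y ⟨⟨ny, hdy, hcfy⟩, hyJ⟩
  have h2y : ∀ k, 2 ≤ ny k := fun k => by rcases hdy k with h | h <;> omega
  by_cases hagree : ∀ i, i < K → ny i = n i
  · left
    have hmem : y ∈ JJ ny (K+1) := mem_JJ_of_isMinusCF h2y hcfy (K+1)
    rcases hdy K with hc | hc
    · left
      have : JJ ny (K+1) = JJ (child n K m m) (K+1) := by
        apply congr_JJ
        intro i hi
        rcases Nat.lt_or_ge i K with h | h
        · rw [hagree i h, ← child_prefix n K m m i h]
        · have : i = K := by omega
          subst this
          rw [hc, child_at]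
      rwa [← this]
    · right
      have : JJ ny (K+1) = JJ (child n K (m+1) m) (K+1) := by
        apply congr_JJ
        intro i hi
        rcases Nat.lt_or_ge i K with h | h
        · rw [hagree i h, ← child_prefix n K (m+1) m i h]
        · have : i = K := by omega
          subst this
          rw [hc, child_at]
      rwa [← this]
  · right
    push_neg at hagree
    have hex : ∃ i, i < K ∧ ny i ≠ n i := hagree
    classical
    have hj := Nat.find_spec hex
    set j := Nat.find hex with hjdef
    have hjK : j < K := hj.1
    have hjne : ny j ≠ n j := hj.2
    have hjmin : ∀ i, i < j → ny i = n i := by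
      intro i hi
      by_contra hne
      exact Nat.find_min hex hi ⟨lt_trans hi hjK, hne⟩
    -- y is the touching point at level j+1
    have hyn : y ∈ JJ n (j+1) := JJ_anti h2 (by omega) hyJ
    have hyny : y ∈ JJ ny (j+1) := JJ_anti h2y (by omega) (mem_JJ_of_isMinusCF h2y hcfy (K+1))
    have heq : y = cv (child n j m m) (j+1) := by
      rcases hd j with hnj | hnj
      · -- n j = m, ny j = m + 1
        have hnyj : ny j = m + 1 := by
          rcases hdy j with h | h
          · exact absurd (h.trans hnj.symm) hjne
          · exact h
        have htouch : lo ny (j+1) = cv n (j+1) :=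
          sibling_touch h2 (fun i hi => (hjmin i hi).symm) hnj hnyj hm
        have h1 : y ≤ cv n (j+1) := hyn.2
        have h2' : cv n (j+1) ≤ y := htouch ▸ hyny.1
        have : y = cv n (j+1) := le_antisymm h1 h2'
        rw [this]
        apply congr_cv
        intro i hi
        rcases Nat.lt_or_ge i j with h | h
        · exact child_prefix n j m m i h
        · have : i = j := by omega
          subst this
          rw [hnj, child_at]
      · -- n j = m + 1, ny j = m
        have hnyj : ny j = m := by
          rcases hdy j with h | h
          · exact h
          · exact absurd (h.trans hnj.symm) hjne
        have htouch : lo n (j+1) = cv ny (j+1) :=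
          sibling_touch h2y hjmin hnyj hnj hm
        have h1 : y ≤ cv ny (j+1) := hyny.2
        have h2' : cv ny (j+1) ≤ y := htouch ▸ hyn.1
        have hy' : y = cv ny (j+1) := le_antisymm h1 h2'
        rw [hy']
        apply congr_cv
        intro i hi
        rcases Nat.lt_or_ge i j with h | h
        · rw [hjmin i h, ← child_prefix n j m m i h]
        · have : i = j := by omega
          subst this
          rw [hnyj, child_at]
    simp only [Set.mem_iUnion, Set.mem_singleton_iff]
    exact ⟨j, hjK, heq⟩

lemma volume_JJ {n : ℕ → ℤ} (k : ℕ) :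
    volume (JJ n k) = ENNReal.ofReal (1 / ((DD n k : ℝ) * (QQ n (k+1) : ℝ))) := by
  unfold JJ lo
  rw [Real.volume_Icc]
  congr 1
  ring

/-- The key arithmetic inequality for the two children. -/
lemma child_sum_ineq {a d μ : ℝ} (hd : 1 ≤ d) (hda : d ≤ a) (ha3 : a ≤ 3 * d) (hμ : 2 ≤ μ) :
    1 / (((μ-2)*a+d) * ((μ-1)*a+d)) + 1 / (((μ-1)*a+d) * (μ*a+d))
      ≤ (8/9) * (1 / (d * a)) := by
  have ha : (0:ℝ) < a := lt_of_lt_of_le (by linarith) hda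
  have hd0 : (0:ℝ) < d := by linarith
  have hA : (0:ℝ) < (μ-2)*a+d := by nlinarith
  have hB : (0:ℝ) < (μ-1)*a+d := by nlinarith
  have hC : (0:ℝ) < μ*a+d := by nlinarith
  have e1 : 1 / (((μ-2)*a+d) * ((μ-1)*a+d)) + 1 / (((μ-1)*a+d) * (μ*a+d))
      = 2 / (((μ-2)*a+d) * (μ*a+d)) := by
    rw [div_add_div _ _ (by positivity) (by positivity), div_eq_div_iff (by positivity) (by positivity)]
    ring
  rw [e1]
  have e2 : (8/9) * (1 / (d * a)) = 8 / (9 * (d * a)) := by ring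
  rw [e2, div_le_div_iff₀ (by positivity) (by positivity)]
  nlinarith [mul_pos ha hd0, sq_nonneg d, mul_nonneg (mul_nonneg (sub_nonneg.mpr hμ) ha.le) ha.le, sq_nonneg (a-d), mul_nonneg (sub_nonneg.mpr hμ) (mul_pos ha hd0).le, mul_nonneg (mul_nonneg (sub_nonneg.mpr hμ) (sub_nonneg.mpr hμ)) (mul_pos ha ha).le]

/-- Measure bound: whenever `Q (K+1) ≤ 3 D K`, the part of `SS` inside `JJ n K` fills at most
`8/9` of it. -/
lemma cover_measure (m : ℤ) (hm : 2 ≤ m) {n : ℕ → ℤ} (hd : ∀ k, n k = m ∨ n k = m + 1) (K : ℕ)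
    (hcond : QQ n (K+1) ≤ 3 * DD n K) :
    volume ({x : ℝ | ∃ n' : ℕ → ℤ, (∀ k, n' k = m ∨ n' k = m + 1) ∧ IsMinusCF x n'} ∩ JJ n K)
      ≤ ENNReal.ofReal ((8/9) * (1 / ((DD n K : ℝ) * (QQ n (K+1) : ℝ)))) := by
  have h2 : ∀ k, 2 ≤ n k := fun k => by rcases hd k with h | h <;> omega
  have hsub := cover_subset m hm hd K
  refine le_trans (measure_mono hsub) ?_
  refine le_trans (measure_union_le _ _) ?_
  have hpts : volume (⋃ j ∈ Set.Iio K, {cv (child n j m m) (j+1)}) = 0 := by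
    refine Set.Countable.measure_zero ?_ _
    exact Set.Countable.biUnion (Set.to_countable _) (fun j _ => Set.countable_singleton _)
  rw [hpts, add_zero]
  refine le_trans (measure_union_le _ _) ?_
  -- child values
  set a : ℤ := QQ n (K+1) with ha_def
  set q0 : ℤ := QQ n K with hq0_def
  set d : ℤ := DD n K with hd_def
  have hdq : d = a - q0 := rfl
  have hchild : ∀ c : ℤ, QQ (child n K c m) (K+2) = c * a - q0 ∧ DD (child n K c m) (K+1) = c * a - q0 - a := by
    intro c
    have hpre := child_prefix n K c m
    have hcong := congr_QP hpre
    have hQ1 : QQ (child n K c m) (K+1) = a := ((hcong (K+1) (le_refl _)).1).symm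
    have hQ0 : QQ (child n K c m) K = q0 := ((hcong K (by omega)).1).symm
    have hQ2 : QQ (child n K c m) (K+2) = c * a - q0 := by
      rw [QQ_rec, child_at, hQ1, hQ0]
    exact ⟨hQ2, by unfold DD; rw [hQ2, hQ1]⟩
  have hd1 : (1:ℝ) ≤ (d:ℝ) := by exact_mod_cast DD_pos h2 K
  have hda : (d:ℝ) ≤ (a:ℝ) := by exact_mod_cast DD_le_QQ h2 K
  have ha3 : (a:ℝ) ≤ 3 * (d:ℝ) := by exact_mod_cast hcond
  have hμ : (2:ℝ) ≤ (m:ℝ) := by exact_mod_cast hm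
  have har : (0:ℝ) < (a:ℝ) := by linarith
  have hdr : (0:ℝ) < (d:ℝ) := by linarith
  have hkey := child_sum_ineq hd1 hda ha3 hμ
  have hq0r : ((q0:ℤ):ℝ) = (a:ℝ) - (d:ℝ) := by
    rw [hdq]; push_cast; ring
  have hcast : ∀ c : ℤ, ((DD (child n K c m) (K+1) : ℤ) : ℝ) = (c:ℝ)*a - q0 - a := fun c => by
    exact_mod_cast congrArg (fun z : ℤ => (z:ℝ)) (hchild c).2
  have hcast2 : ∀ c : ℤ, ((QQ (child n K c m) (K+2) : ℤ) : ℝ) = (c:ℝ)*a - q0 := fun c => by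
    exact_mod_cast congrArg (fun z : ℤ => (z:ℝ)) (hchild c).1
  have hvolm : volume (JJ (child n K m m) (K+1))
      = ENNReal.ofReal (1 / ((((m:ℝ)-2)*a+d) * (((m:ℝ)-1)*a+d))) := by
    rw [volume_JJ]
    congr 1
    rw [hcast m, hcast2 m, hq0r]
    ring_nf
  have hvolm1 : volume (JJ (child n K (m+1) m) (K+1))
      = ENNReal.ofReal (1 / ((((m:ℝ)-1)*a+d) * ((m:ℝ)*a+d))) := by
    rw [volume_JJ]
    congr 1
    rw [hcast (m+1), hcast2 (m+1), hq0r]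
    push_cast
    ring_nf
  rw [hvolm, hvolm1]
  have hA : (0:ℝ) < ((m:ℝ)-2)*a+d := by nlinarith
  have hB : (0:ℝ) < ((m:ℝ)-1)*a+d := by nlinarith
  have hC : (0:ℝ) < (m:ℝ)*a+d := by nlinarith
  rw [← ENNReal.ofReal_add (le_of_lt (by positivity)) (le_of_lt (by positivity))]
  exact ENNReal.ofReal_le_ofReal hkey

lemma digit_big {n : ℕ → ℤ} (h2 : ∀ k, 2 ≤ n k) {k : ℕ} (hk : 3 ≤ n k) :
    QQ n (k+2) ≤ 3 * DD n (k+1) := by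
  have h1 := QQ_rec n k
  have h3 := QQ_lt h2 k
  have h4 := QQ_pos h2 k
  have h5 : DD n (k+1) = QQ n (k+2) - QQ n (k+1) := rfl
  nlinarith

/-- Eventually-`m` digit sequences form a countable set. -/
lemma countable_eventually_m (m : ℤ) :
    Set.Countable {n : ℕ → ℤ | ∃ K, ∀ j, K ≤ j → n j = m} := by
  have : {n : ℕ → ℤ | ∃ K, ∀ j, K ≤ j → n j = m} ⊆
      ⋃ K : ℕ, Set.range (fun v : Fin K → ℤ => (fun j => if h : j < K then v ⟨j, h⟩ else m : ℕ → ℤ)) := by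
    rintro n ⟨K, hK⟩
    refine Set.mem_iUnion.mpr ⟨K, ⟨fun i => n i, ?_⟩⟩
    funext j
    by_cases h : j < K
    · simp [h]
    · simp only [h, dif_neg, not_false_iff]
      exact (hK j (by omega)).symm
  exact Set.Countable.mono this (Set.countable_iUnion (fun K => Set.countable_range _))

lemma countable_S1 (m : ℤ) :
    Set.Countable {x : ℝ | ∃ n : ℕ → ℤ, (∃ K, ∀ j, K ≤ j → n j = m) ∧ IsMinusCF x n} := by
  have h1 : {x : ℝ | ∃ n : ℕ → ℤ, (∃ K, ∀ j, K ≤ j → n j = m) ∧ IsMinusCF x n}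
      = ⋃ n ∈ {n : ℕ → ℤ | ∃ K, ∀ j, K ≤ j → n j = m}, {x | IsMinusCF x n} := by
    ext x
    simp only [Set.mem_setOf_eq, Set.mem_iUnion]
    tauto
  rw [h1]
  refine Set.Countable.biUnion (countable_eventually_m m) (fun n _ => ?_)
  apply Set.Subsingleton.countable
  intro x hx y hy
  exact tendsto_nhds_unique hx hy

lemma not_density_point (m : ℤ) (hm : 2 ≤ m) (S2 : Set ℝ)
    (hS2sub : S2 ⊆ {x : ℝ | ∃ n : ℕ → ℤ, (∀ k, n k = m ∨ n k = m + 1) ∧ IsMinusCF x n})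
    {nx : ℕ → ℤ} {x : ℝ} (hdx : ∀ k, nx k = m ∨ nx k = m + 1) (hcf : IsMinusCF x nx)
    (hinf : ∀ K, ∃ j, K ≤ j ∧ nx j = m + 1) :
    ¬ Tendsto (fun r => volume (S2 ∩ Metric.closedBall x r) / volume (Metric.closedBall x r))
        (𝓝[>] 0) (𝓝 1) := by
  intro htend
  have h2x : ∀ k, 2 ≤ nx k := fun k => by rcases hdx k with h | h <;> omega
  choose jf hjf1 hjf2 using hinf
  set rr : ℕ → ℝ := fun K => 1 / ((DD nx (jf K + 1) : ℝ) * (QQ nx (jf K + 2) : ℝ)) with hrr_def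
  have hD1 : ∀ K : ℕ, (1:ℝ) ≤ (DD nx (jf K + 1) : ℝ) := fun K => by
    exact_mod_cast DD_pos h2x (jf K + 1)
  have hQK : ∀ K : ℕ, (K:ℝ) + 1 ≤ (QQ nx (jf K + 2) : ℝ) := fun K => by
    have h1 : ((jf K + 2 : ℕ) : ℤ) ≤ QQ nx (jf K + 2) := le_QQ h2x (jf K + 2)
    have h2 : K + 1 ≤ jf K + 2 := by have := hjf1 K; omega
    have h1' : ((jf K : ℝ)) + 2 ≤ ((QQ nx (jf K + 2) : ℤ) : ℝ) := by exact_mod_cast h1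
    have h2' : ((K:ℝ) + 1) ≤ ((jf K : ℝ) + 2) := by exact_mod_cast h2
    linarith
  have hQpos : ∀ K : ℕ, (0:ℝ) < (QQ nx (jf K + 2) : ℝ) := fun K => by
    have h := hQK K
    have h0 : (0:ℝ) ≤ (K:ℝ) := Nat.cast_nonneg K
    linarith
  have hrpos : ∀ K : ℕ, 0 < rr K := fun K => by
    have := hD1 K; have := hQpos K
    rw [hrr_def]
    positivity
  have hrle : ∀ K : ℕ, rr K ≤ 1 / ((K:ℝ) + 1) := fun K => by
    rw [hrr_def]
    apply one_div_le_one_div_of_le (by positivity)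
    calc (K:ℝ) + 1 ≤ (QQ nx (jf K + 2) : ℝ) := hQK K
      _ = 1 * (QQ nx (jf K + 2) : ℝ) := by ring
      _ ≤ (DD nx (jf K + 1) : ℝ) * (QQ nx (jf K + 2) : ℝ) :=
          mul_le_mul_of_nonneg_right (hD1 K) (le_of_lt (hQpos K))
  have htendr : Tendsto rr atTop (𝓝[>] (0:ℝ)) := by
    rw [tendsto_nhdsWithin_iff]
    constructor
    · apply squeeze_zero (fun K => le_of_lt (hrpos K)) hrle
      exact tendsto_one_div_add_atTop_nhds_zero_nat
    · exact Eventually.of_forall (fun K => hrpos K)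
  -- the ratio bound at each radius
  have hub : ∀ K : ℕ, volume (S2 ∩ Metric.closedBall x (rr K)) / volume (Metric.closedBall x (rr K))
      ≤ ENNReal.ofReal (17/18) := by
    intro K
    set k1 := jf K + 1 with hk1
    set r := rr K with hr
    have hxJ : x ∈ JJ nx k1 := mem_JJ_of_isMinusCF h2x hcf k1
    have hlo : lo nx k1 = cv nx k1 - r := rfl
    have hlen : volume (JJ nx k1) = ENNReal.ofReal r := volume_JJ k1
    have hJB : JJ nx k1 ⊆ Metric.closedBall x r := by
      intro y hy
      rw [Real.closedBall_eq_Icc]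
      obtain ⟨hy1, hy2⟩ := hy
      obtain ⟨hx1, hx2⟩ := hxJ
      rw [hlo] at hy1 hx1
      constructor
      · linarith
      · linarith
    have hcond : QQ nx (k1+1) ≤ 3 * DD nx k1 :=
      digit_big h2x (by rw [hjf2 K]; omega)
    have hcm := cover_measure m hm hdx k1 hcond
    have hsplit : S2 ∩ Metric.closedBall x r ⊆
        ({x : ℝ | ∃ n' : ℕ → ℤ, (∀ k, n' k = m ∨ n' k = m + 1) ∧ IsMinusCF x n'} ∩ JJ nx k1)
          ∪ (Metric.closedBall x r \ JJ nx k1) := by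
      rintro y ⟨hyS, hyB⟩
      by_cases hyJ : y ∈ JJ nx k1
      · exact Or.inl ⟨hS2sub hyS, hyJ⟩
      · exact Or.inr ⟨hyB, hyJ⟩
    have hdiff : volume (Metric.closedBall x r \ JJ nx k1) ≤ ENNReal.ofReal r := by
      rw [measure_diff hJB measurableSet_Icc.nullMeasurableSet (by rw [hlen]; exact ENNReal.ofReal_ne_top)]
      rw [Real.volume_closedBall, hlen]
      rw [show (2*r) = r + r from by ring, ENNReal.ofReal_add (le_of_lt (hrpos K)) (le_of_lt (hrpos K))]
      simp
      exact le_rfl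
    have hnum : volume (S2 ∩ Metric.closedBall x r)
        ≤ ENNReal.ofReal ((17/9) * r) := by
      refine le_trans (measure_mono hsplit) (le_trans (measure_union_le _ _) ?_)
      refine le_trans (add_le_add hcm hdiff) ?_
      have hDQ : (0:ℝ) < (DD nx k1 : ℝ) * (QQ nx (k1+1) : ℝ) := by
        have := hD1 K; have := hQpos K; rw [hk1]; positivity
      rw [← ENNReal.ofReal_add (mul_nonneg (by norm_num) (le_of_lt (one_div_pos.mpr hDQ))) (le_of_lt (hrpos K))]
      apply ENNReal.ofReal_le_ofReal
      have hreq : 1 / ((DD nx k1 : ℝ) * (QQ nx (k1+1) : ℝ)) = r := rfl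
      rw [hreq]
      linarith [hrpos K]
    rw [Real.volume_closedBall]
    refine le_trans (ENNReal.div_le_div_right hnum _) ?_
    rw [← ENNReal.ofReal_div_of_pos (by linarith [hrpos K])]
    apply ENNReal.ofReal_le_ofReal
    rw [div_le_iff₀ (by linarith [hrpos K])]
    ring_nf
    nlinarith [hrpos K]
  have hle := le_of_tendsto (htend.comp htendr) (Eventually.of_forall hub)
  have : (1:ENNReal) < 1 := lt_of_le_of_lt hle (ENNReal.ofReal_lt_one.mpr (by norm_num))
  exact lt_irrefl _ this

theorem bounded_digits_measure_zero (m : ℤ) (hm : 2 ≤ m) :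
    volume {x : ℝ | x ∈ Set.Ico (-1 : ℝ) 0 ∧
      ∃ n : ℕ → ℤ, (∀ k, n k = m ∨ n k = m + 1) ∧ IsMinusCF x n} = 0 := by
  set SS := {x : ℝ | ∃ n : ℕ → ℤ, (∀ k, n k = m ∨ n k = m + 1) ∧ IsMinusCF x n} with hSSdef
  set S1 := {x : ℝ | ∃ n : ℕ → ℤ, (∃ K, ∀ j, K ≤ j → n j = m) ∧ IsMinusCF x n} with hS1def
  have hvol1 : volume S1 = 0 := Set.Countable.measure_zero (countable_S1 m) _
  have hvol2 : volume (SS \ S1) = 0 := by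
    have hbes := Besicovitch.ae_tendsto_measure_inter_div volume (SS \ S1)
    rw [ae_iff] at hbes
    have hsub : SS \ S1 ⊆ {x : ℝ | ¬ Tendsto
        (fun r => volume ((SS \ S1) ∩ Metric.closedBall x r) / volume (Metric.closedBall x r))
        (𝓝[>] 0) (𝓝 1)} := by
      rintro x ⟨hxSS, hxS1⟩
      obtain ⟨nx, hdx, hcf⟩ := hxSS
      have hinf : ∀ K, ∃ j, K ≤ j ∧ nx j = m + 1 := by
        by_contra hcon
        push_neg at hcon
        obtain ⟨K, hK⟩ := hcon
        refine hxS1 ⟨nx, ⟨K, fun j hj => ?_⟩, hcf⟩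
        rcases hdx j with h | h
        · exact h
        · exact absurd h (hK j hj)
      exact not_density_point m hm (SS \ S1) (fun y hy => hy.1) hdx hcf hinf
    have h0 : (volume.restrict (SS \ S1)) (SS \ S1) = 0 := measure_mono_null hsub hbes
    rwa [Measure.restrict_apply_self] at h0
  have hsub0 : {x : ℝ | x ∈ Set.Ico (-1 : ℝ) 0 ∧
      ∃ n : ℕ → ℤ, (∀ k, n k = m ∨ n k = m + 1) ∧ IsMinusCF x n} ⊆ SS := fun x hx => hx.2
  refine le_antisymm ?_ (zero_le)
  calc volume {x : ℝ | x ∈ Set.Ico (-1 : ℝ) 0 ∧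
      ∃ n : ℕ → ℤ, (∀ k, n k = m ∨ n k = m + 1) ∧ IsMinusCF x n}
      ≤ volume SS := measure_mono hsub0
    _ ≤ volume (S1 ∪ (SS \ S1)) := measure_mono (fun x hx => by
        by_cases h : x ∈ S1
        · exact Or.inl h
        · exact Or.inr ⟨hx, h⟩)
    _ ≤ volume S1 + volume (SS \ S1) := measure_union_le _ _
    _ = 0 := by rw [hvol1, hvol2, add_zero]
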